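/- If R is a simple graph on s vertices, then its fixed loss satisfies φ(R) ≤ s(2^{s−1} − 1). -/

import Mathlib

open Classical Finset

namespace Paper

variable {V : Type*}

/-- The number of cliques (vertex sets inducing complete subgraphs, including
the empty set and singletons) of a graph. -/
noncomputable def cliqueCount [Fintype V] (G : SimpleGraph V) : ℕ :=
  (Finset.univ.filter fun s : Finset V => G.IsClique (s : Set V)).card

/-- The number of cliques of size `t`. -/
noncomputable def cliqueCountSize [Fintype V] (G : SimpleGraph V) (t : ℕ) : ℕ :=
  (Finset.univ.filter fun s : Finset V => G.IsClique (s : Set V) ∧ s.card = t).card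

/-- A finset of vertices is independent if its vertices are pairwise nonadjacent. -/
def IsIndepFinset (G : SimpleGraph V) (s : Finset V) : Prop :=
  (s : Set V).Pairwise fun u v => ¬ G.Adj u v

/-- The number of independent sets (including the empty set) of a graph. -/
noncomputable def indepCount [Fintype V] (G : SimpleGraph V) : ℕ :=
  (Finset.univ.filter fun s : Finset V => IsIndepFinset G s).card

/-- The number of independent sets of size `t`. -/
noncomputable def indepCountSize [Fintype V] (G : SimpleGraph V) (t : ℕ) : ℕ :=
  (Finset.univ.filter fun s : Finset V => IsIndepFinset G s ∧ s.card = t).card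

/-- `S_T`: the set of common neighbors of all vertices of `T`. -/
noncomputable def commonNbrs [Fintype V] (G : SimpleGraph V) (T : Finset V) : Finset V :=
  Finset.univ.filter fun v => ∀ x ∈ T, G.Adj x v

/-- The weight `w(C)` of a clique: the number of common neighbors of its vertices. -/
noncomputable def weight [Fintype V] (G : SimpleGraph V) (T : Finset V) : ℕ :=
  (commonNbrs G T).card

/-- A clique `T` is tight (for max degree bound `r`) if `w(T) = r + 1 - |T|`. -/
def IsTight [Fintype V] (r : ℕ) (G : SimpleGraph V) (T : Finset V) : Prop :=
  G.IsClique (T : Set V) ∧ weight G T + T.card = r + 1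

/-- A cluster is a maximal tight clique. -/
def IsCluster [Fintype V] (r : ℕ) (G : SimpleGraph V) (T : Finset V) : Prop :=
  IsTight r G T ∧ ∀ T' : Finset V, T ⊆ T' → IsTight r G T' → T' = T

/-- The graph `G_T`, obtained from `G` by adding all edges within `S_T` and deleting all
edges between `S_T` and `V(G) \ (T ∪ S_T)`. -/
noncomputable def modGraph [Fintype V] (G : SimpleGraph V) (T : Finset V) : SimpleGraph V :=
  SimpleGraph.fromRel fun u v =>
    (u ∈ commonNbrs G T ∧ v ∈ commonNbrs G T) ∨
    (G.Adj u v ∧ ¬(u ∈ commonNbrs G T ∧ v ∉ T ∪ commonNbrs G T) ∧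
      ¬(v ∈ commonNbrs G T ∧ u ∉ T ∪ commonNbrs G T))

/-- The graph `R_T`: the complement of the subgraph of `G` induced on `S_T`. -/
noncomputable def RT [Fintype V] (G : SimpleGraph V) (T : Finset V) :
    SimpleGraph ((commonNbrs G T : Finset V) : Set V) :=
  (SimpleGraph.induce ((commonNbrs G T : Finset V) : Set V) G)ᶜ

/-- `δ_I`: the minimum degree in `R` over the vertices of `I`. -/
noncomputable def minDegOn {W : Type*} [Fintype W] (R : SimpleGraph W) (I : Finset W) : ℕ :=
  sInf ((fun x => R.degree x) '' (I : Set W))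

/-- The fixed loss `φ(R) = Σ_{∅ ≠ I independent} (2 ^ δ_I - 1)`. -/
noncomputable def fixedLoss {W : Type*} [Fintype W] (R : SimpleGraph W) : ℕ :=
  ∑ I ∈ Finset.univ.filter (fun I : Finset W => I.Nonempty ∧ IsIndepFinset R I),
    (2 ^ minDegOn R I - 1)

/-- The disjoint union of `a` copies of `K_{r+1}` together with one copy of `K_b`. -/
noncomputable def kUnion (a r b : ℕ) : SimpleGraph ((Fin a × Fin (r + 1)) ⊕ Fin b) :=
  SimpleGraph.fromRel fun x y =>
    match x, y with
    | Sum.inl (i, _), Sum.inl (j, _) => i = j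
    | Sum.inr _, Sum.inr _ => True
    | _, _ => False

/-- The disjoint union of `a` copies of `K_3` together with one copy of the cycle `C_m`. -/
noncomputable def triCyc (a m : ℕ) : SimpleGraph ((Fin a × Fin 3) ⊕ Fin m) :=
  SimpleGraph.fromRel fun x y =>
    match x, y with
    | Sum.inl (i, _), Sum.inl (j, _) => i = j
    | Sum.inr u, Sum.inr v => (u.val + 1) % m = v.val
    | _, _ => False

end Paper

open Paper

lemma card_powerset_nonempty {W : Type*} [DecidableEq W] (S : Finset W) :
    (S.powerset.filter Finset.Nonempty).card = 2 ^ S.card - 1 := by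
  have h : S.powerset.filter Finset.Nonempty = S.powerset.erase ∅ := by
    ext t
    simp [Finset.nonempty_iff_ne_empty, and_comm]
  rw [h, Finset.card_erase_of_mem (Finset.empty_mem_powerset S), Finset.card_powerset]


/-- **Theorem 4.5.** If `R` is a graph on `s` vertices, then `φ(R) ≤ φ(K_s) = s(2^{s-1} - 1)`. -/
theorem stmt12 {W : Type*} [Fintype W] (s : ℕ) (hcard : Fintype.card W = s)
    (R : SimpleGraph W) :
    fixedLoss R ≤ s * (2 ^ (s - 1) - 1) := by
  classical
  set A := Finset.univ.filter (fun I : Finset W => I.Nonempty ∧ IsIndepFinset R I) with hA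
  rcases isEmpty_or_nonempty W with hW | hW
  · have hz : fixedLoss R = 0 := by
      rw [fixedLoss]
      apply Finset.sum_eq_zero
      intro I hI
      rw [Finset.mem_filter] at hI
      obtain ⟨y, hy⟩ := hI.2.1
      exact hW.elim y
    rw [hz]; exact Nat.zero_le _
  have hpick : ∀ I : Finset W, ∃ y : W, I ∈ A → y ∈ I ∧ R.degree y = minDegOn R I := by
    intro I
    by_cases hI : I ∈ A
    · rw [hA, Finset.mem_filter] at hI
      have hne : ((fun x => R.degree x) '' (I : Set W)).Nonempty :=
        (hI.2.1.to_set).image _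
      obtain ⟨y, hy, hdy⟩ := Nat.sInf_mem hne
      exact ⟨y, fun _ => ⟨hy, hdy⟩⟩
    · exact ⟨Classical.arbitrary W, fun h => absurd h hI⟩
  choose x hxall using hpick
  have hx : ∀ I ∈ A, x I ∈ I := fun I hI => (hxall I hI).1
  have hdeg : ∀ I ∈ A, R.degree (x I) = minDegOn R I := fun I hI => (hxall I hI).2
  set T := A.sigma (fun I => ((R.neighborFinset (x I)).powerset.filter Finset.Nonempty)) with hT
  have h1 : fixedLoss R = T.card := by
    rw [hT, Finset.card_sigma, fixedLoss, ← hA]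
    apply Finset.sum_congr rfl
    intro I hI
    rw [card_powerset_nonempty, SimpleGraph.card_neighborFinset_eq_degree, hdeg I hI]
  set B := (Finset.univ : Finset W).sigma
      (fun v => Finset.univ.filter fun K : Finset W => K.Nonempty ∧ v ∉ K) with hB
  -- independent-set fact: vertices of I.erase (x I) are not neighbors of x I
  have hindep : ∀ I ∈ A, ∀ y ∈ I.erase (x I), y ∉ R.neighborFinset (x I) := by
    intro I hI y hy hadj
    rw [hA, Finset.mem_filter] at hI
    have hyI : y ∈ I := Finset.mem_of_mem_erase hy
    have hyne : y ≠ x I := Finset.ne_of_mem_erase hy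
    have hxI : x I ∈ I := hx I (by rw [hA, Finset.mem_filter]; exact hI)
    exact hI.2.2 (Finset.mem_coe.mpr hxI) (Finset.mem_coe.mpr hyI) (Ne.symm hyne)
      (SimpleGraph.mem_neighborFinset _ _ _ |>.mp hadj)
  have h2 : T.card ≤ B.card := by
    apply Finset.card_le_card_of_injOn
      (fun p => ⟨x p.1, p.1.erase (x p.1) ∪ p.2⟩)
    · intro p hp
      rw [hT, Finset.mem_coe, Finset.mem_sigma] at hp
      obtain ⟨hIA, hJ⟩ := hp
      rw [Finset.mem_filter, Finset.mem_powerset] at hJ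
      obtain ⟨hJsub, hJne⟩ := hJ
      rw [Finset.mem_coe, hB, Finset.mem_sigma]
      refine ⟨Finset.mem_univ _, ?_⟩
      rw [Finset.mem_filter]
      refine ⟨Finset.mem_univ _, hJne.mono Finset.subset_union_right, ?_⟩
      intro hmem
      rcases Finset.mem_union.mp hmem with h | h
      · exact Finset.notMem_erase _ _ h
      · exact R.notMem_neighborFinset_self _ (hJsub h)
    · intro p hp q hq heq
      rw [Finset.mem_coe, hT, Finset.mem_sigma] at hp hq
      obtain ⟨hpA, hpJ⟩ := hp
      obtain ⟨hqA, hqJ⟩ := hq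
      rw [Finset.mem_filter, Finset.mem_powerset] at hpJ hqJ
      obtain ⟨hpsub, hpne⟩ := hpJ
      obtain ⟨hqsub, hqne⟩ := hqJ
      have hv : x p.1 = x q.1 := congrArg Sigma.fst heq
      have hK : p.1.erase (x p.1) ∪ p.2 = q.1.erase (x q.1) ∪ q.2 := by
        have := congrArg Sigma.snd heq
        simpa using this
      -- recover J and I from the pair
      have key : ∀ (r : (_ : Finset W) × Finset W), r.1 ∈ A → r.2 ⊆ R.neighborFinset (x r.1) →
          (r.1.erase (x r.1) ∪ r.2) ∩ R.neighborFinset (x r.1) = r.2 ∧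
          insert (x r.1) ((r.1.erase (x r.1) ∪ r.2) \ R.neighborFinset (x r.1)) = r.1 := by
        intro r hrA hrsub
        constructor
        · ext y
          simp only [Finset.mem_inter, Finset.mem_union]
          constructor
          · rintro ⟨h1 | h1, h2⟩
            · exact absurd h2 (hindep r.1 hrA y h1)
            · exact h1
          · intro hy
            exact ⟨Or.inr hy, hrsub hy⟩
        · ext y
          simp only [Finset.mem_insert, Finset.mem_sdiff, Finset.mem_union]
          constructor
          · rintro (rfl | ⟨h1 | h1, h2⟩)
            · exact hx r.1 hrA
            · exact Finset.mem_of_mem_erase h1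
            · exact absurd (hrsub h1) h2
          · intro hy
            by_cases hye : y = x r.1
            · exact Or.inl hye
            · exact Or.inr ⟨Or.inl (Finset.mem_erase.mpr ⟨hye, hy⟩),
                hindep r.1 hrA y (Finset.mem_erase.mpr ⟨hye, hy⟩)⟩
      obtain ⟨hp1, hp2⟩ := key p hpA hpsub
      obtain ⟨hq1, hq2⟩ := key q hqA hqsub
      have hJ : p.2 = q.2 := by rw [← hp1, ← hq1, hK, hv]
      have hI : p.1 = q.1 := by rw [← hp2, ← hq2, hK, hv]
      exact Sigma.ext hI (heq_of_eq hJ)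
  have h3 : B.card = s * (2 ^ (s - 1) - 1) := by
    rw [hB, Finset.card_sigma]
    have hc : ∀ v : W,
        (Finset.univ.filter fun K : Finset W => K.Nonempty ∧ v ∉ K).card = 2 ^ (s - 1) - 1 := by
      intro v
      have he : (Finset.univ.filter fun K : Finset W => K.Nonempty ∧ v ∉ K)
          = ((Finset.univ.erase v).powerset.filter Finset.Nonempty) := by
        ext K
        simp [Finset.subset_erase, and_comm]
      rw [he, card_powerset_nonempty,
        Finset.card_erase_of_mem (Finset.mem_univ v), Finset.card_univ, hcard]
    simp only [hc, Finset.sum_const, Finset.card_univ, hcard, smul_eq_mul]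
  rw [h1, ← h3]; exact h2
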